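/- Let c ∈ ℝ, r > 0 and t₀ ∈ ℝ with t₀ − r + c > 0, and let τ : [t₀, ∞) → [0, r] be a continuous function such that t + c − τ(t) > 0 for all t ≥ t₀. Then for every continuous function x : [t₀−r, ∞) → ℝ that is differentiable on [t₀, ∞) and satisfies x'(t) = x(t−τ(t))/(t + c − τ(t)) for t ≥ t₀, the limit lim_{t→∞} x(t)/(t + c) exists, and the derivative of t ↦ x(t)/(t + c) tends to 0 as t → ∞. -/

import Mathlib

open Filter Topology


lemma aux_inv (t₀ r c : ℝ) (hr : 0 < r) (hc : 0 < t₀ - r + c)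
    (τ : ℝ → ℝ) (hτr : ∀ t, t₀ ≤ t → τ t ∈ Set.Icc 0 r)
    (hpos : ∀ t, t₀ ≤ t → 0 < t + c - τ t)
    (z : ℝ → ℝ) (hzc : ContinuousOn z (Set.Ici (t₀ - r)))
    (hz : ∀ t, t₀ < t → HasDerivAt z (z (t - τ t) / (t + c - τ t)) t)
    (t₁ : ℝ) (ht₁ : t₀ ≤ t₁)
    (hneg : ∀ s ∈ Set.Icc (t₁ - r) t₁, z s < 0) :
    ∀ t, t₁ - r ≤ t → z t < 0 := by
  intro t ht
  by_contra hge
  push_neg at hge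
  have htt₁ : t₁ < t := by
    by_contra hle
    push_neg at hle
    exact absurd (hneg t ⟨ht, hle⟩) (not_lt.2 hge)
  set S : Set ℝ := {s ∈ Set.Icc t₁ t | 0 ≤ z s} with hSdef
  have hSne : S.Nonempty := ⟨t, ⟨le_of_lt htt₁, le_refl t⟩, hge⟩
  have hsub : Set.Icc t₁ t ⊆ Set.Ici (t₀ - r) := by
    intro u hu
    simp only [Set.mem_Ici]
    have := hu.1; linarith
  have hSclosed : IsClosed S := by
    have h1 : S = Set.Icc t₁ t ∩ z ⁻¹' Set.Ici 0 := by
      ext u; simp [hSdef, Set.mem_Icc, and_assoc]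
    rw [h1]
    exact ContinuousOn.preimage_isClosed_of_isClosed (hzc.mono hsub) isClosed_Icc isClosed_Ici
  have hSbdd : BddBelow S := ⟨t₁, fun u hu => hu.1.1⟩
  set s := sInf S with hsdef
  have hsS : s ∈ S := hSclosed.csInf_mem hSne hSbdd
  have hs1 : t₁ ≤ s := hsS.1.1
  have hzs : 0 ≤ z s := hsS.2
  have hst₁ : t₁ < s := by
    rcases eq_or_lt_of_le hs1 with h | h
    · exact absurd (hneg t₁ ⟨by linarith, le_refl _⟩) (by rw [← h] at hzs; linarith)
    · exact h
  have hbefore : ∀ u ∈ Set.Ico t₁ s, z u < 0 := by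
    intro u hu
    by_contra h
    push_neg at h
    have : u ∈ S := ⟨⟨hu.1, le_trans hu.2.le hsS.1.2⟩, h⟩
    exact absurd (csInf_le hSbdd this) (not_le.2 hu.2)
  have hanti : AntitoneOn z (Set.Icc t₁ s) := by
    apply antitoneOn_of_deriv_nonpos (convex_Icc _ _)
    · exact hzc.mono (fun u hu => by simp only [Set.mem_Ici]; have := hu.1; linarith)
    · rw [interior_Icc]
      intro u hu
      exact (hz u (lt_of_le_of_lt ht₁ hu.1)).differentiableAt.differentiableWithinAt
    · rw [interior_Icc]
      intro u hu
      have hu0 : t₀ ≤ u := le_trans ht₁ hu.1.le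
      have hd := (hz u (lt_of_le_of_lt ht₁ hu.1)).deriv
      rw [hd]
      have hτu := hτr u hu0
      have hzneg : z (u - τ u) < 0 := by
        rcases le_or_gt (u - τ u) t₁ with h | h
        · exact hneg _ ⟨by have := hτu.2; have := hu.1; simp at *; linarith, h⟩
        · exact hbefore _ ⟨h.le, by have := hτu.1; have := hu.2; linarith⟩
      exact (div_nonpos_of_nonpos_of_nonneg hzneg.le (hpos u hu0).le)
  have : z s ≤ z t₁ := hanti ⟨le_refl _, hst₁.le⟩ ⟨hst₁.le, le_refl _⟩ hst₁.le
  have := hneg t₁ ⟨by linarith, le_refl _⟩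
  linarith



/- For the linear retarded equation with variable delay
`x'(t) = x(t - τ(t))/(t + c - τ(t))`, every solution `x` (continuous on `[t₀-r, ∞)`,
differentiable on `[t₀, ∞)` with right derivative at `t₀`) satisfies: the limit of
`x(t)/(t + c)` as `t → ∞` exists, and the derivative of `t ↦ x(t)/(t + c)` tends to `0`
as `t → ∞`. -/
theorem stmt11
    (c r t₀ : ℝ) (hr : 0 < r) (hc : 0 < t₀ - r + c)
    (τ : ℝ → ℝ)
    (hτc : ContinuousOn τ (Set.Ici t₀))
    (hτr : ∀ t, t₀ ≤ t → τ t ∈ Set.Icc 0 r)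
    (hpos : ∀ t, t₀ ≤ t → 0 < t + c - τ t)
    (x : ℝ → ℝ)
    (hxc : ContinuousOn x (Set.Ici (t₀ - r)))
    (hx : ∀ t, t₀ ≤ t →
      HasDerivWithinAt x (x (t - τ t) / (t + c - τ t)) (Set.Ici t₀) t) :
    (∃ L : ℝ, Tendsto (fun t => x t / (t + c)) atTop (𝓝 L)) ∧
    (∃ y' : ℝ → ℝ,
      (∀ t, t₀ < t → HasDerivAt (fun u => x u / (u + c)) (y' t) t) ∧
      Tendsto y' atTop (𝓝 0)) := by
  have hx' : ∀ t, t₀ < t → HasDerivAt x (x (t - τ t) / (t + c - τ t)) t :=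
    fun t ht => (hx t ht.le).hasDerivAt (Ici_mem_nhds ht)

  have hcd : ∀ t : ℝ, t₀ - r ≤ t → 0 < t + c := fun t ht => by linarith
  set y : ℝ → ℝ := fun t => x t / (t + c) with hydef
  have hyc : ContinuousOn y (Set.Ici (t₀ - r)) := by
    apply hxc.div (by fun_prop)
    intro t ht
    exact ne_of_gt (hcd t ht)
  -- derivative of shifted function
  have hzK : ∀ K : ℝ, ∀ t, t₀ < t →
      HasDerivAt (fun s => x s - K * (s + c))
        ((x (t - τ t) - K * ((t - τ t) + c)) / (t + c - τ t)) t := by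
    intro K t ht
    have h1 : HasDerivAt (fun s : ℝ => K * (s + c)) K t := by
      simpa using ((hasDerivAt_id t).add_const c).const_mul K
    have h2 := (hx' t ht).sub h1
    refine h2.congr_deriv (Eq.symm ?_)
    have hd := ne_of_gt (hpos t ht.le)
    field_simp
    ring
  have hzK' : ∀ K : ℝ, ∀ t, t₀ < t →
      HasDerivAt (fun s => K * (s + c) - x s)
        ((K * ((t - τ t) + c) - x (t - τ t)) / (t + c - τ t)) t := by
    intro K t ht
    have h1 : HasDerivAt (fun s : ℝ => K * (s + c)) K t := by
      simpa using ((hasDerivAt_id t).add_const c).const_mul K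
    have h2 := h1.sub (hx' t ht)
    refine h2.congr_deriv (Eq.symm ?_)
    have hd := ne_of_gt (hpos t ht.le)
    rw [div_eq_iff hd, sub_mul, div_mul_cancel₀ _ hd]
    ring
  -- upper key
  have hwinsub : ∀ a : ℝ, t₀ ≤ a → Set.Icc (a - r) a ⊆ Set.Ici (t₀ - r) := by
    intro a ha u hu
    simp only [Set.mem_Ici]
    have := hu.1; linarith
  have hbddA : ∀ a : ℝ, t₀ ≤ a → BddAbove (y '' Set.Icc (a - r) a) := by
    intro a ha
    exact (isCompact_Icc.image_of_continuousOn (hyc.mono (hwinsub a ha))).bddAbove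
  have hbddB : ∀ a : ℝ, t₀ ≤ a → BddBelow (y '' Set.Icc (a - r) a) := by
    intro a ha
    exact (isCompact_Icc.image_of_continuousOn (hyc.mono (hwinsub a ha))).bddBelow
  have hne : ∀ a : ℝ, (y '' Set.Icc (a - r) a).Nonempty :=
    fun a => (Set.nonempty_Icc.2 (by linarith)).image y
  have key : ∀ a, t₀ ≤ a → ∀ s, a - r ≤ s → y s ≤ sSup (y '' Set.Icc (a - r) a) := by
    intro a ha s hs
    set Ma := sSup (y '' Set.Icc (a - r) a) with hMa
    have hmem : ∀ u ∈ Set.Icc (a - r) a, y u ≤ Ma :=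
      fun u hu => le_csSup (hbddA a ha) (Set.mem_image_of_mem y hu)
    have hstep : ∀ ε : ℝ, 0 < ε → y s < Ma + ε := by
      intro ε hε
      have hinv := aux_inv t₀ r c hr hc τ hτr hpos
        (fun s => x s - (Ma + ε) * (s + c))
        (hxc.sub (by fun_prop)) (hzK (Ma + ε)) a ha
        (by
          intro u hu
          have hu' : t₀ - r ≤ u := hwinsub a ha hu
          have hcu := hcd u hu'
          have := hmem u hu
          have hxu : x u ≤ Ma * (u + c) := by
            rw [hydef] at this
            simpa [div_le_iff₀ hcu] using this
          show x u - (Ma + ε) * (u + c) < 0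
          nlinarith)
        s hs
      have hcs := hcd s (by linarith)
      simp only [sub_neg] at hinv
      rw [hydef]
      simpa [div_lt_iff₀ hcs] using hinv
    by_contra hcon
    push_neg at hcon
    have := hstep (y s - Ma) (by linarith)
    linarith
  have key' : ∀ a, t₀ ≤ a → ∀ s, a - r ≤ s → sInf (y '' Set.Icc (a - r) a) ≤ y s := by
    intro a ha s hs
    set ma := sInf (y '' Set.Icc (a - r) a) with hma
    have hmem : ∀ u ∈ Set.Icc (a - r) a, ma ≤ y u :=
      fun u hu => csInf_le (hbddB a ha) (Set.mem_image_of_mem y hu)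
    have hstep : ∀ ε : ℝ, 0 < ε → ma - ε < y s := by
      intro ε hε
      have hinv := aux_inv t₀ r c hr hc τ hτr hpos
        (fun s => (ma - ε) * (s + c) - x s)
        ((by fun_prop : ContinuousOn (fun s : ℝ => (ma - ε) * (s + c)) _).sub hxc)
        (hzK' (ma - ε)) a ha
        (by
          intro u hu
          have hu' : t₀ - r ≤ u := hwinsub a ha hu
          have hcu := hcd u hu'
          have := hmem u hu
          have hxu : ma * (u + c) ≤ x u := by
            rw [hydef] at this
            simpa [le_div_iff₀ hcu] using this
          show (ma - ε) * (u + c) - x u < 0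
          nlinarith)
        s hs
      have hcs := hcd s (by linarith)
      simp only [sub_neg] at hinv
      rw [hydef]
      simpa [lt_div_iff₀ hcs] using hinv
    by_contra hcon
    push_neg at hcon
    have := hstep (ma - y s) (by linarith)
    linarith
  -- global bounds
  set M₀ := sSup (y '' Set.Icc (t₀ - r) t₀) with hM₀
  set m₀ := sInf (y '' Set.Icc (t₀ - r) t₀) with hm₀
  have hub : ∀ t, t₀ - r ≤ t → y t ≤ M₀ := fun t ht => key t₀ le_rfl t ht
  have hlb : ∀ t, t₀ - r ≤ t → m₀ ≤ y t := fun t ht => key' t₀ le_rfl t ht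
  set B := max M₀ (-m₀) with hBdef
  have hB : ∀ t, t₀ - r ≤ t → |y t| ≤ B := by
    intro t ht
    rw [abs_le]
    constructor
    · have := hlb t ht
      have : -m₀ ≤ B := le_max_right _ _
      linarith [hlb t ht]
    · exact le_trans (hub t ht) (le_max_left _ _)
  have hB0 : 0 ≤ B := le_trans (abs_nonneg _) (hB t₀ (by linarith))
  -- derivative of y
  have hyd : ∀ t, t₀ < t → HasDerivAt y ((y (t - τ t) - y t) / (t + c)) t := by
    intro t ht
    have hct : (0:ℝ) < t + c := hcd t (by linarith)
    have h1 := (hx' t ht).div ((hasDerivAt_id t).add_const c) (ne_of_gt hct)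
    have hut : (0:ℝ) < (t - τ t) + c := by
      have := hτr t ht.le
      have := hcd (t - τ t) (by have := (hτr t ht.le).2; linarith)
      linarith
    have hd : t + c - τ t = (t - τ t) + c := by ring
    refine h1.congr_deriv (Eq.symm ?_)
    rw [hydef]
    simp only [id]
    rw [hd]
    field_simp
    try ring
    try exact Or.inl trivial
  -- window functions
  set F : ℝ → ℝ := fun t => sSup (y '' Set.Icc (max t t₀ - r) (max t t₀)) with hFdef
  set G : ℝ → ℝ := fun t => sInf (y '' Set.Icc (max t t₀ - r) (max t t₀)) with hGdef
  have hFanti : Antitone F := by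
    intro t₁ t₂ h
    have ha : t₀ ≤ max t₁ t₀ := le_max_right _ _
    have hab : max t₁ t₀ ≤ max t₂ t₀ := max_le_max h le_rfl
    apply csSup_le (hne _)
    rintro v ⟨s, hs, rfl⟩
    exact key (max t₁ t₀) ha s (by have := hs.1; linarith)
  have hGmono : Monotone G := by
    intro t₁ t₂ h
    have ha : t₀ ≤ max t₁ t₀ := le_max_right _ _
    have hab : max t₁ t₀ ≤ max t₂ t₀ := max_le_max h le_rfl
    apply le_csInf (hne _)
    rintro v ⟨s, hs, rfl⟩
    exact key' (max t₁ t₀) ha s (by have := hs.1; linarith)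
  have hGF : ∀ t, G t ≤ F t := by
    intro t
    have hmem : y (max t t₀) ∈ y '' Set.Icc (max t t₀ - r) (max t t₀) :=
      Set.mem_image_of_mem y ⟨by linarith, le_rfl⟩
    exact le_trans (csInf_le (hbddB _ (le_max_right _ _)) hmem)
      (le_csSup (hbddA _ (le_max_right _ _)) hmem)
  have hFlb : ∀ t, m₀ ≤ F t := by
    intro t
    have hmem : y (max t t₀) ∈ y '' Set.Icc (max t t₀ - r) (max t t₀) :=
      Set.mem_image_of_mem y ⟨by linarith, le_rfl⟩
    exact le_trans (hlb (max t t₀) (by have := le_max_right t t₀; linarith))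
      (le_csSup (hbddA _ (le_max_right _ _)) hmem)
  have hGub : ∀ t, G t ≤ M₀ := by
    intro t
    have hmem : y (max t t₀) ∈ y '' Set.Icc (max t t₀ - r) (max t t₀) :=
      Set.mem_image_of_mem y ⟨by linarith, le_rfl⟩
    exact le_trans (csInf_le (hbddB _ (le_max_right _ _)) hmem)
      (hub (max t t₀) (by have := le_max_right t t₀; linarith))
  have hFtends : Tendsto F atTop (𝓝 (⨅ t, F t)) :=
    tendsto_atTop_ciInf hFanti ⟨m₀, by rintro _ ⟨t, rfl⟩; exact hFlb t⟩
  have hGtends : Tendsto G atTop (𝓝 (⨆ t, G t)) :=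
    tendsto_atTop_ciSup hGmono ⟨M₀, by rintro _ ⟨t, rfl⟩; exact hGub t⟩
  -- gap estimate
  have hgap : ∀ t, t₀ + r + 1 ≤ t → F t - G t ≤ 2 * B * r / (t - r + c) := by
    intro t ht
    have hmax : max t t₀ = t := max_eq_left (by linarith)
    have htrc : 0 < t - r + c := by linarith
    set C := 2 * B / (t - r + c) with hC
    have hC0 : 0 ≤ C := div_nonneg (by linarith) htrc.le
    have hlip : ∀ a ∈ Set.Icc (t - r) t, ∀ b ∈ Set.Icc (t - r) t, y b - y a ≤ C * r := by
      have hderiv : ∀ u ∈ Set.Icc (t - r) t,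
          HasDerivWithinAt y ((y (u - τ u) - y u) / (u + c)) (Set.Icc (t - r) t) u := by
        intro u hu
        exact (hyd u (by have := hu.1; linarith)).hasDerivWithinAt
      have hbound : ∀ u ∈ Set.Icc (t - r) t, ‖(y (u - τ u) - y u) / (u + c)‖ ≤ C := by
        intro u hu
        have hu0 : t₀ < u := by have := hu.1; linarith
        have huc : 0 < u + c := hcd u (by linarith)
        have hτu := hτr u hu0.le
        have h1 : |y (u - τ u)| ≤ B := hB _ (by have := hτu.2; have := hu.1; linarith)
        have h2 : |y u| ≤ B := hB _ (by linarith)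
        rw [Real.norm_eq_abs, abs_div, abs_of_pos huc]
        apply div_le_div₀ (by linarith) _ htrc (by have := hu.1; linarith)
        calc |y (u - τ u) - y u| ≤ |y (u - τ u)| + |y u| := abs_sub _ _
          _ ≤ 2 * B := by linarith
      intro a ha b hb
      have := (convex_Icc (t - r) t).norm_image_sub_le_of_norm_hasDerivWithin_le
        hderiv hbound ha hb
      have hba : ‖b - a‖ ≤ r := by
        rw [Real.norm_eq_abs, abs_le]
        constructor <;> [linarith [ha.2, hb.1]; linarith [ha.1, hb.2]]
      calc y b - y a ≤ ‖y b - y a‖ := le_abs_self _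
        _ ≤ C * ‖b - a‖ := this
        _ ≤ C * r := by nlinarith
    have h1 : F t ≤ G t + C * r := by
      apply csSup_le (hne _)
      rintro v ⟨s, hs, rfl⟩
      rw [hmax] at hs
      have h2 : y s - C * r ≤ G t := by
        apply le_csInf (hne _)
        rintro w ⟨s', hs', rfl⟩
        rw [hmax] at hs'
        have := hlip s' hs' s hs
        linarith
      linarith
    have : C * r = 2 * B * r / (t - r + c) := by rw [hC]; ring
    linarith [h1, this]
  -- limits
  have hbt : Tendsto (fun t : ℝ => t - r + c) atTop atTop := by
    have : (fun t : ℝ => t - r + c) = fun t : ℝ => t + (c - r) := by funext t; ring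
    rw [this]
    exact tendsto_atTop_add_const_right atTop (c - r) tendsto_id
  have hbound_tends : Tendsto (fun t : ℝ => 2 * B * r / (t - r + c)) atTop (𝓝 0) :=
    Tendsto.div_atTop tendsto_const_nhds hbt
  have hFG : Tendsto (fun t => F t - G t) atTop (𝓝 ((⨅ t, F t) - ⨆ t, G t)) :=
    hFtends.sub hGtends
  have hFG0 : Tendsto (fun t => F t - G t) atTop (𝓝 0) := by
    apply tendsto_of_tendsto_of_tendsto_of_le_of_le' tendsto_const_nhds hbound_tends
    · exact Eventually.of_forall fun t => by linarith [hGF t]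
    · exact eventually_atTop.2 ⟨t₀ + r + 1, hgap⟩
  have heq : (⨅ t, F t) = ⨆ t, G t := by
    have := tendsto_nhds_unique hFG hFG0
    linarith
  have hyev : ∀ᶠ t in atTop, G t ≤ y t ∧ y t ≤ F t := by
    filter_upwards [eventually_ge_atTop t₀] with t ht
    have hmax : max t t₀ = t := max_eq_left ht
    have hmem : y t ∈ y '' Set.Icc (max t t₀ - r) (max t t₀) := by
      rw [hmax]
      exact Set.mem_image_of_mem y ⟨by linarith, le_rfl⟩
    exact ⟨csInf_le (hbddB _ (le_max_right _ _)) hmem,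
      le_csSup (hbddA _ (le_max_right _ _)) hmem⟩
  have hytends : Tendsto y atTop (𝓝 (⨅ t, F t)) := by
    apply tendsto_of_tendsto_of_tendsto_of_le_of_le' (heq ▸ hGtends) hFtends
    · exact hyev.mono fun t h => h.1
    · exact hyev.mono fun t h => h.2
  -- derivative function
  set yd : ℝ → ℝ := fun t => if t₀ < t then (y (t - τ t) - y t) / (t + c) else 0 with hyddef
  have hydt : ∀ t, t₀ < t → HasDerivAt (fun u => x u / (u + c)) (yd t) t := by
    intro t ht
    rw [hyddef]
    simp only [if_pos ht]
    exact hyd t ht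
  have hydtends : Tendsto yd atTop (𝓝 0) := by
    apply squeeze_zero_norm' (a := fun t : ℝ => 2 * B / (t - r + c))
    · filter_upwards [eventually_ge_atTop (t₀ + r + 1)] with t ht
      have ht0 : t₀ < t := by linarith
      have htc : 0 < t + c := hcd t (by linarith)
      have htrc : 0 < t - r + c := by linarith
      have hτt := hτr t ht0.le
      have h1 : |y (t - τ t)| ≤ B := hB _ (by have := hτt.2; linarith)
      have h2 : |y t| ≤ B := hB _ (by linarith)
      rw [hyddef]
      simp only [if_pos ht0, Real.norm_eq_abs, abs_div, abs_of_pos htc]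
      apply div_le_div₀ (by linarith) _ htrc (by linarith)
      calc |y (t - τ t) - y t| ≤ |y (t - τ t)| + |y t| := abs_sub _ _
        _ ≤ 2 * B := by linarith
    · exact Tendsto.div_atTop tendsto_const_nhds hbt
  exact ⟨⟨_, hytends⟩, ⟨yd, hydt, hydtends⟩⟩
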